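/- Let k be a field of characteristic 2, J the 4×4 antidiagonal matrix of ones, and define 𝔰𝔭₄ = {M : Mᵀ * J + J * M = 0}. Let u = 1 + E₀₁ + E₂₃ (so u⁻¹ = u). Then for every M ∈ 𝔰𝔭₄, (u * M * u) 0 0 + (u * M * u) 2 2 = M 0 0 + M 2 2. (I.e. the 'semisimple' covector X*_s : M ↦ M₀₀ + M₂₂ on 𝔰𝔭₄* is fixed by the coadjoint action of u.) -/

import Mathlib

theorem stmt_10 (k : Type*) [Field k] [CharP k 2]
    (J : Matrix (Fin 4) (Fin 4) k)
    (hJ : ∀ i j, J i j = if (i : ℕ) + (j : ℕ) = 3 then 1 else 0)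
    (u : Matrix (Fin 4) (Fin 4) k)
    (hu : u = 1 + Matrix.single 0 1 1 + Matrix.single 2 3 1)
    (M : Matrix (Fin 4) (Fin 4) k)
    (hM : M.transpose * J + J * M = 0) :
    (u * M * u) 0 0 + (u * M * u) 2 2 = M 0 0 + M 2 2 := by
  have h3 : ((3 : Fin 4) : ℕ) = 3 := rfl
  have h := congrFun (congrFun hM 2) 0
  simp [Matrix.add_apply, Matrix.mul_apply, Fin.sum_univ_four, hJ,
    Matrix.transpose_apply, Matrix.zero_apply, h3] at h
  subst hu
  simp [Matrix.add_apply, Matrix.mul_apply, Fin.sum_univ_four,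
    Matrix.one_apply, Matrix.single_apply, h3]
  linear_combination h
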